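/- Consider the α-SMC algorithm with randomised connectivity with parameter C, with potentials satisfying 0 < g_t(x) ≤ κ_g. Then for every t ≥ 1 and every measurable φ with |φ| ≤ 1, almost surely E[ (W_t^1)² φ(X_t^1) | F_{t−1} ] = (C N)^{−1} Σ_{j=1}^N (W_{t−1}^j)² g_{t−1}(X_{t−1}^j)² K_t φ(X_{t−1}^j) + (C−1) ( C N (N−1) )^{−1} Σ_{j ≠ j'} W_{t−1}^{j'} W_{t−1}^{j} g_{t−1}(X_{t−1}^{j'}) g_{t−1}(X_{t−1}^{j}) K_t φ(X_{t−1}^{j}). -/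

import Mathlib

open MeasureTheory ProbabilityTheory
open scoped BigOperators

/-- counting subsets of fixed size containing a given set -/
lemma count_card {α : Type*} [DecidableEq α] [Fintype α] (u : Finset α) (C : ℕ)
    (hu : u.card ≤ C) :
    ((Finset.univ : Finset (Finset α)).filter (fun s => s.card = C ∧ u ⊆ s)).card
      = (Fintype.card α - u.card).choose (C - u.card) := by
  have hcc : uᶜ.card = Fintype.card α - u.card := Finset.card_compl u
  rw [← hcc, ← Finset.card_powersetCard (C - u.card) uᶜ]
  apply Finset.card_bij' (fun s _ => s \ u) (fun t _ => t ∪ u)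
  · intro s hs
    simp only [Finset.mem_filter, Finset.mem_univ, true_and] at hs
    simp only [Finset.mem_powersetCard]
    exact ⟨fun x hx => by simp [(Finset.mem_sdiff.mp hx).2],
      by rw [Finset.card_sdiff_of_subset hs.2, hs.1]⟩
  · intro t ht
    simp only [Finset.mem_powersetCard] at ht
    have hdisj : Disjoint t u := by
      refine Finset.disjoint_left.mpr fun x hx hxu => ?_
      have := ht.1 hx
      simp only [Finset.mem_compl] at this
      exact this hxu
    simp only [Finset.mem_filter, Finset.mem_univ, true_and]
    constructor
    · rw [Finset.card_union_of_disjoint hdisj, ht.2]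
      omega
    · exact Finset.subset_union_right
  · intro s hs
    simp only [Finset.mem_filter, Finset.mem_univ, true_and] at hs
    exact Finset.sdiff_union_of_subset hs.2
  · intro t ht
    simp only [Finset.mem_powersetCard] at ht
    have hdisj : Disjoint t u := by
      refine Finset.disjoint_left.mpr fun x hx hxu => ?_
      have := ht.1 hx
      simp only [Finset.mem_compl] at this
      exact this hxu
    rw [Finset.union_sdiff_distrib, Finset.sdiff_self, Finset.union_empty,
      Finset.sdiff_eq_self_of_disjoint hdisj]

/-- integral of a function of a finitely-valued random variable -/
lemma integral_comp_finset {Ω : Type*} [MeasurableSpace Ω] (P : Measure Ω)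
    [IsProbabilityMeasure P] {β : Type*} [Fintype β] [DecidableEq β]
    [MeasurableSpace β] [MeasurableSingletonClass β]
    (S : Ω → β) (hS : Measurable S) (f : β → ℝ) :
    ∫ ω, f (S ω) ∂P = ∑ s : β, f s * (P {ω | S ω = s}).toReal := by
  have hm : ∀ s : β, MeasurableSet {ω | S ω = s} := fun s =>
    hS (measurableSet_singleton s)
  have h1 : ∀ ω, f (S ω) = ∑ s : β, Set.indicator {ω | S ω = s} (fun _ => f s) ω := by
    intro ω
    rw [Finset.sum_eq_single (S ω)]
    · simp
    · intro b _ hb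
      exact Set.indicator_of_notMem (fun h => hb (Set.mem_setOf_eq ▸ h).symm) _
    · simp
  calc ∫ ω, f (S ω) ∂P
      = ∫ ω, ∑ s : β, Set.indicator {ω | S ω = s} (fun _ => f s) ω ∂P := by
        simp_rw [← h1]
    _ = ∑ s : β, ∫ ω, Set.indicator {ω | S ω = s} (fun _ => f s) ω ∂P :=
        integral_finset_sum _ (fun s _ => (integrable_const (f s)).indicator (hm s))
    _ = ∑ s : β, f s * (P {ω | S ω = s}).toReal := by
        refine Finset.sum_congr rfl fun s _ => ?_
        rw [integral_indicator_const _ (hm s), smul_eq_mul, mul_comm, measureReal_def]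

lemma expAA {Ω : Type*} [MeasurableSpace Ω] (P : Measure Ω) [IsProbabilityMeasure P]
    (N C : ℕ) (hC : 1 ≤ C) (hCN : C ≤ N)
    (S : Ω → Finset (Fin N))
    (hS : @Measurable Ω (Finset (Fin N)) _ ⊤ S)
    (hcard : ∀ ω, (S ω).card = C)
    (hunif : ∀ s : Finset (Fin N), s.card = C →
      P {ω | S ω = s} = (↑(N.choose C))⁻¹)
    (j' j : Fin N) :
    ∫ ω, (if j' ∈ S ω then (C:ℝ)⁻¹ else 0) * (if j ∈ S ω then (C:ℝ)⁻¹ else 0) ∂P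
      = if j' = j then ((C:ℝ) * N)⁻¹
        else ((C:ℝ) - 1) * ((C:ℝ) * N * ((N:ℝ) - 1))⁻¹ := by
  classical
  letI : MeasurableSpace (Finset (Fin N)) := ⊤
  haveI : MeasurableSingletonClass (Finset (Fin N)) := ⟨fun _ => trivial⟩
  have hCpos : (0:ℝ) < C := by exact_mod_cast hC
  have hNpos : (0:ℝ) < N := by exact_mod_cast lt_of_lt_of_le hC hCN
  have hchpos : (0:ℝ) < N.choose C := by exact_mod_cast Nat.choose_pos hCN
  set f : Finset (Fin N) → ℝ :=
    fun s => (if j' ∈ s then (C:ℝ)⁻¹ else 0) * (if j ∈ s then (C:ℝ)⁻¹ else 0) with hf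
  have hint : ∫ ω, (if j' ∈ S ω then (C:ℝ)⁻¹ else 0) * (if j ∈ S ω then (C:ℝ)⁻¹ else 0) ∂P
      = ∑ s : Finset (Fin N), f s * (P {ω | S ω = s}).toReal :=
    integral_comp_finset P S hS f
  rw [hint]
  -- only sets of cardinality C with j, j' elements contribute
  set u : Finset (Fin N) := if j' = j then {j} else {j', j} with hu
  have husub : ∀ s : Finset (Fin N), (u ⊆ s) ↔ (j' ∈ s ∧ j ∈ s) := by
    intro s
    by_cases h : j' = j <;> simp [hu, h, Finset.insert_subset_iff]
  have hw0 : ∀ s : Finset (Fin N), s.card ≠ C → P {ω | S ω = s} = 0 := by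
    intro s hs
    have : {ω | S ω = s} = ∅ := by
      ext ω; simp only [Set.mem_setOf_eq, Set.mem_empty_iff_false, iff_false]
      intro h; exact hs (h ▸ hcard ω)
    simp [this]
  have hstep : ∑ s : Finset (Fin N), f s * (P {ω | S ω = s}).toReal
      = ∑ s ∈ (Finset.univ : Finset (Finset (Fin N))).filter
          (fun s => s.card = C ∧ u ⊆ s), f s * (P {ω | S ω = s}).toReal := by
    symm
    apply Finset.sum_filter_of_ne
    intro s _ hne
    constructor
    · by_contra hc
      exact hne (by rw [hw0 s hc]; simp)
    · rw [husub]
      constructor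
      · by_contra hc
        exact hne (by simp [hf, hc])
      · by_contra hc
        exact hne (by simp [hf, hc])
  rw [hstep]
  have hconst : ∀ s ∈ (Finset.univ : Finset (Finset (Fin N))).filter
      (fun s => s.card = C ∧ u ⊆ s),
      f s * (P {ω | S ω = s}).toReal = (C:ℝ)⁻¹ * (C:ℝ)⁻¹ * ((N.choose C : ℝ))⁻¹ := by
    intro s hs
    simp only [Finset.mem_filter, Finset.mem_univ, true_and] at hs
    obtain ⟨hcardC, hus⟩ := hs
    rw [husub] at hus
    have : (P {ω | S ω = s}).toReal = ((N.choose C : ℝ))⁻¹ := by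
      rw [hunif s hcardC]
      simp
    rw [this, hf]
    simp [hus.1, hus.2]
  rw [Finset.sum_congr rfl hconst, Finset.sum_const, nsmul_eq_mul]
  by_cases h : j' = j
  · -- diagonal case
    have hucard : u.card = 1 := by simp [hu, h]
    have hcnt : ((Finset.univ : Finset (Finset (Fin N))).filter
        (fun s => s.card = C ∧ u ⊆ s)).card = (N - 1).choose (C - 1) := by
      rw [count_card u C (by omega)]
      simp [hucard]
    rw [hcnt, if_pos h]
    have hid1 : N * (N - 1).choose (C - 1) = N.choose C * C := by
      have := Nat.add_one_mul_choose_eq (N - 1) (C - 1)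
      have h1 : N - 1 + 1 = N := by omega
      have h2 : C - 1 + 1 = C := by omega
      rw [h1, h2] at this
      exact this
    have hid1R : (N:ℝ) * ((N - 1).choose (C - 1) : ℝ) = (N.choose C : ℝ) * C := by
      exact_mod_cast congrArg (Nat.cast : ℕ → ℝ) hid1
    have e : (((N - 1).choose (C - 1) : ℕ) : ℝ) * ((C:ℝ)⁻¹ * (C:ℝ)⁻¹ * ((N.choose C : ℝ))⁻¹)
        = (((N - 1).choose (C - 1) : ℕ) : ℝ) / ((C:ℝ) * (C:ℝ) * (N.choose C : ℝ)) := by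
      ring
    have e2 : ((C:ℝ) * N)⁻¹ = 1 / ((C:ℝ) * N) := by ring
    have hden1 : (0:ℝ) < (C:ℝ) * (C:ℝ) * (N.choose C : ℝ) := by positivity
    have hden2 : (0:ℝ) < (C:ℝ) * N := by positivity
    rw [e, e2, div_eq_div_iff hden1.ne' hden2.ne']
    linear_combination (C:ℝ) * hid1R
  · -- off-diagonal case
    have hN2 : 2 ≤ N := by
      by_contra hlt
      push_neg at hlt
      interval_cases N
      · exact j.elim0
      · exact h (Subsingleton.elim j' j)
    have hucard : u.card = 2 := by
      rw [hu, if_neg h]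
      rw [Finset.card_insert_of_notMem (by simp [h]), Finset.card_singleton]
    rw [if_neg h]
    by_cases hC2 : 2 ≤ C
    · have hcnt : ((Finset.univ : Finset (Finset (Fin N))).filter
          (fun s => s.card = C ∧ u ⊆ s)).card = (N - 2).choose (C - 2) := by
        rw [count_card u C (by omega)]
        simp [hucard]
      rw [hcnt]
      have hid1 : N * (N - 1).choose (C - 1) = N.choose C * C := by
        have := Nat.add_one_mul_choose_eq (N - 1) (C - 1)
        have h1 : N - 1 + 1 = N := by omega
        have h2 : C - 1 + 1 = C := by omega
        rw [h1, h2] at this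
        exact this
      have hid2 : (N - 1) * (N - 2).choose (C - 2) = (N - 1).choose (C - 1) * (C - 1) := by
        have := Nat.add_one_mul_choose_eq (N - 2) (C - 2)
        have h1 : N - 2 + 1 = N - 1 := by omega
        have h2 : C - 2 + 1 = C - 1 := by omega
        rw [h1, h2] at this
        exact this
      have hidR : (N:ℝ) * ((N:ℝ) - 1) * ((N - 2).choose (C - 2) : ℝ)
          = (N.choose C : ℝ) * C * ((C:ℝ) - 1) := by
        have hc1 : ((C - 1 : ℕ) : ℝ) = (C:ℝ) - 1 := by
          rw [Nat.cast_sub hC]; simp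
        have hn1 : ((N - 1 : ℕ) : ℝ) = (N:ℝ) - 1 := by
          rw [Nat.cast_sub (by omega)]; simp
        have e1 : (N:ℝ) * ((N - 1).choose (C - 1) : ℝ) = (N.choose C : ℝ) * C := by
          exact_mod_cast congrArg (Nat.cast : ℕ → ℝ) hid1
        have e2 : ((N:ℝ) - 1) * ((N - 2).choose (C - 2) : ℝ)
            = ((N - 1).choose (C - 1) : ℝ) * ((C:ℝ) - 1) := by
          rw [← hn1, ← hc1]
          exact_mod_cast congrArg (Nat.cast : ℕ → ℝ) hid2
        nlinarith [e1, e2]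
      have hN1pos : (0:ℝ) < (N:ℝ) - 1 := by
        have : (2:ℝ) ≤ N := by exact_mod_cast hN2
        linarith
      have e : (((N - 2).choose (C - 2) : ℕ) : ℝ) * ((C:ℝ)⁻¹ * (C:ℝ)⁻¹ * ((N.choose C : ℝ))⁻¹)
          = (((N - 2).choose (C - 2) : ℕ) : ℝ) / ((C:ℝ) * (C:ℝ) * (N.choose C : ℝ)) := by
        ring
      have e2 : ((C:ℝ) - 1) * ((C:ℝ) * N * ((N:ℝ) - 1))⁻¹
          = ((C:ℝ) - 1) / ((C:ℝ) * N * ((N:ℝ) - 1)) := by ring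
      have hden1 : (0:ℝ) < (C:ℝ) * (C:ℝ) * (N.choose C : ℝ) := by positivity
      have hden2 : (0:ℝ) < (C:ℝ) * N * ((N:ℝ) - 1) :=
        mul_pos (mul_pos hCpos hNpos) hN1pos
      rw [e, e2, div_eq_div_iff hden1.ne' hden2.ne']
      linear_combination (C:ℝ) * hidR
    · -- C = 1, both sides vanish
      have hC1 : C = 1 := by omega
      have hempt : ((Finset.univ : Finset (Finset (Fin N))).filter
          (fun s => s.card = C ∧ u ⊆ s)) = ∅ := by
        rw [Finset.filter_eq_empty_iff]
        rintro s - ⟨hcardC, hus⟩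
        have := Finset.card_le_card hus
        omega
      rw [hempt]
      simp [hC1]

theorem stmt19
    -- the state space and the state-space model
    {X : Type*} [MeasurableSpace X]
    (π₀ : Measure X) [IsProbabilityMeasure π₀]
    (K : ℕ → Kernel X X) (hK : ∀ t, IsMarkovKernel (K t))
    (g : ℕ → X → ℝ) (hgmeas : ∀ t, Measurable (g t)) (hgpos : ∀ t x, 0 < g t x)
    (κg : ℝ) (hgbd : ∀ t x, g t x ≤ κg)
    -- the underlying probability space
    {Ω : Type*} [m0 : MeasurableSpace Ω] (P : Measure Ω) [IsProbabilityMeasure P]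
    -- the α-SMC particle system with `N` particles and randomised connectivity
    -- with parameter `C`
    (N C : ℕ) (hC : 1 ≤ C) (hCN : C ≤ N)
    (F : ℕ → MeasurableSpace Ω) (hFle : ∀ t, F t ≤ m0) (hFmono : Monotone F)
    (ξ : ℕ → Fin N → Ω → X) (W : ℕ → Fin N → Ω → ℝ)
    -- `S t i` is the random set of the `C` nonzero entries of row `i` of `α_t`
    (S : ℕ → Fin N → Ω → Finset (Fin N))
    (A : ℕ → Ω → Matrix (Fin N) (Fin N) ℝ)
    (hA : ∀ t ω i j, A t ω i j = if j ∈ S t i ω then (C : ℝ)⁻¹ else 0)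
    (hScard : ∀ t i ω, (S t i ω).card = C)
    (hSmeas : ∀ t i, @Measurable Ω (Finset (Fin N)) (F (t + 1)) ⊤ (S t i))
    -- each row subset is uniformly distributed over the `C`-element subsets
    (hSunif : ∀ t i (s : Finset (Fin N)), s.card = C →
      P {ω | S t i ω = s} = (↑(N.choose C))⁻¹)
    -- the rows of the matrices `(α_t)` are mutually independent (over all times and rows)
    (hSiid : iIndepFun (m := fun _ : ℕ × Fin N => (⊤ : MeasurableSpace (Finset (Fin N))))
      (fun p => S p.1 p.2) P)
    -- `α_t` is independent of `F_t`
    (hSindep : ∀ t, Indep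
      (⨆ i, MeasurableSpace.comap (S t i) (⊤ : MeasurableSpace (Finset (Fin N)))) (F t) P)
    (hξmeas : ∀ t i, Measurable[F t] (ξ t i))
    -- initial weights and weight recursion
    (hW0 : ∀ i ω, W 0 i ω = 1)
    (hWrec : ∀ t i ω, W (t + 1) i ω = ∑ j, A t ω i j * W t j ω * g t (ξ t j ω))
    -- initialisation: i.i.d. samples from `π₀`
    (hξ0meas : ∀ i, Measurable (ξ 0 i))
    (hξ0indep : iIndepFun (ξ 0) P)
    (hξ0law : ∀ i, Measure.map (ξ 0 i) P = π₀)
    -- conditionally on `F t` and `α_t`, the particles at time `t+1` are independent with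
    -- the prescribed mixture distributions
    (hcond : ∀ t (φ : Fin N → X → ℝ), (∀ i, Measurable (φ i)) → (∀ i x, |φ i x| ≤ 1) →
      P[(fun ω => ∏ i, φ i (ξ (t + 1) i ω)) |
          F t ⊔ (⨆ i, MeasurableSpace.comap (S t i) (⊤ : MeasurableSpace (Finset (Fin N))))]
        =ᵐ[P] fun ω => ∏ i, ((W (t + 1) i ω)⁻¹ *
            ∑ j, A t ω i j * W t j ω * g t (ξ t j ω) * ∫ y, φ i y ∂(K (t + 1) (ξ t j ω)))) :
    -- conclusion: the conditional second-moment identity for the first particle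
    ∀ t (φ : X → ℝ), Measurable φ → (∀ x, |φ x| ≤ 1) →
      P[(fun ω => (W (t + 1) (⟨0, lt_of_lt_of_le hC hCN⟩ : Fin N) ω) ^ 2 *
            φ (ξ (t + 1) (⟨0, lt_of_lt_of_le hC hCN⟩ : Fin N) ω)) | F t]
        =ᵐ[P] fun ω =>
          ((C : ℝ) * N)⁻¹ *
              ∑ j, (W t j ω) ^ 2 * (g t (ξ t j ω)) ^ 2 * ∫ y, φ y ∂(K (t + 1) (ξ t j ω))
            + ((C : ℝ) - 1) * ((C : ℝ) * N * ((N : ℝ) - 1))⁻¹ *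
                ∑ p ∈ (Finset.univ : Finset (Fin N)).offDiag,
                  W t p.1 ω * W t p.2 ω * g t (ξ t p.1 ω) * g t (ξ t p.2 ω) *
                    ∫ y, φ y ∂(K (t + 1) (ξ t p.2 ω)) := by
  classical
  intro t φ hφm hφb
  haveI := hK (t + 1)
  set i0 : Fin N := (⟨0, lt_of_lt_of_le hC hCN⟩ : Fin N) with hi0def
  have hCR : (0:ℝ) < C := by exact_mod_cast hC
  -- a convenient bound for the potentials
  set b : ℝ := max κg 1 with hbdef
  have hb1 : (1:ℝ) ≤ b := le_max_right _ _
  have hb0 : (0:ℝ) < b := lt_of_lt_of_le one_pos hb1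
  have hgb : ∀ u x, g u x ≤ b := fun u x => (hgbd u x).trans (le_max_left _ _)
  -- basic measurability of the matrix entries
  have hAmeas : ∀ (m : MeasurableSpace Ω) (u : ℕ) (i j : Fin N),
      @Measurable Ω (Finset (Fin N)) m ⊤ (S u i) →
      Measurable[m] (fun ω => A u ω i j) := by
    intro m u i j hSm
    have hrepr : (fun ω => A u ω i j)
        = (fun s : Finset (Fin N) => if j ∈ s then (C:ℝ)⁻¹ else 0) ∘ (S u i) := by
      funext ω; simp [hA]
    rw [hrepr]
    exact measurable_from_top.comp hSm
  -- measurability of the weights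
  have hWmeas : ∀ u i, Measurable[F u] (W u i) := by
    intro u
    induction u with
    | zero =>
      intro i
      have : W 0 i = fun _ => (1:ℝ) := funext (hW0 i)
      rw [this]; exact measurable_const
    | succ u ih =>
      intro i
      have : W (u + 1) i = fun ω => ∑ j, A u ω i j * W u j ω * g u (ξ u j ω) :=
        funext (hWrec u i)
      rw [this]
      apply Finset.measurable_sum
      intro j _
      exact ((hAmeas (F (u+1)) u i j (hSmeas u i)).mul
        ((ih j).mono (hFmono (Nat.le_succ u)) le_rfl)).mul
        ((hgmeas u).comp ((hξmeas u j).mono (hFmono (Nat.le_succ u)) le_rfl))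
  have hWm0 : ∀ u i, Measurable (W u i) := fun u i => (hWmeas u i).mono (hFle u) le_rfl
  have hξm0 : ∀ u i, Measurable (ξ u i) := fun u i => (hξmeas u i).mono (hFle u) le_rfl
  -- positivity of the weights
  have hA0 : ∀ u ω i j, 0 ≤ A u ω i j := by
    intro u ω i j; rw [hA]; split <;> positivity
  have hWpos : ∀ u i ω, 0 < W u i ω := by
    intro u
    induction u with
    | zero => intro i ω; rw [hW0]; norm_num
    | succ u ih =>
      intro i ω
      rw [hWrec]
      have hne : (S u i ω).Nonempty := Finset.card_pos.mp (by rw [hScard]; omega)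
      obtain ⟨j0, hj0⟩ := hne
      apply Finset.sum_pos'
      · intro j _
        exact mul_nonneg (mul_nonneg (hA0 u ω i j) (le_of_lt (ih j ω)))
          (le_of_lt (hgpos u _))
      · refine ⟨j0, Finset.mem_univ _, ?_⟩
        rw [hA, if_pos hj0]
        exact mul_pos (mul_pos (by positivity) (ih j0 ω)) (hgpos u _)
  -- bound on the weights
  have hWbd : ∀ u i ω, W u i ω ≤ b ^ u := by
    intro u
    induction u with
    | zero => intro i ω; rw [hW0]; simp
    | succ u ih =>
      intro i ω
      rw [hWrec]
      have hsumA : ∑ j, A u ω i j = 1 := by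
        have : ∀ j, A u ω i j = if j ∈ S u i ω then (C:ℝ)⁻¹ else 0 := fun j => hA u ω i j
        rw [Finset.sum_congr rfl (fun j _ => this j), Finset.sum_ite_mem,
          Finset.univ_inter, Finset.sum_const, hScard, nsmul_eq_mul]
        field_simp
      calc ∑ j, A u ω i j * W u j ω * g u (ξ u j ω)
          ≤ ∑ j, A u ω i j * (b ^ u * b) := by
            apply Finset.sum_le_sum
            intro j _
            have h1 : A u ω i j * W u j ω * g u (ξ u j ω)
                ≤ A u ω i j * (b ^ u) * b := by
              apply mul_le_mul
                (mul_le_mul le_rfl (ih j ω) (le_of_lt (hWpos u j ω)) (hA0 u ω i j))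
                (hgb u _) (le_of_lt (hgpos u _))
              exact mul_nonneg (hA0 u ω i j) (by positivity)
            calc A u ω i j * W u j ω * g u (ξ u j ω) ≤ A u ω i j * (b ^ u) * b := h1
              _ = A u ω i j * (b ^ u * b) := by ring
        _ = (∑ j, A u ω i j) * (b ^ u * b) := by rw [← Finset.sum_mul]
        _ = b ^ (u + 1) := by rw [hsumA, one_mul]; ring
  have hWabs : ∀ u i ω, |W u i ω| ≤ b ^ u := by
    intro u i ω
    rw [abs_of_pos (hWpos u i ω)]
    exact hWbd u i ω
  -- integrability of bounded measurable functions
  have hInt : ∀ (f : Ω → ℝ) (c : ℝ), Measurable f → (∀ ω, |f ω| ≤ c) →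
      Integrable f P := by
    intro f c hm hbd
    exact (integrable_const c).mono' hm.aestronglyMeasurable
      (Filter.Eventually.of_forall (by simpa [Real.norm_eq_abs] using hbd))
  -- the kernel integral of φ
  have hKmeas : Measurable fun x => ∫ y, φ y ∂(K (t+1) x) := by
    have hsm : StronglyMeasurable (fun p : X × X => φ p.2) :=
      (hφm.comp measurable_snd).stronglyMeasurable
    exact (hsm.integral_kernel_prod_right' (κ := K (t+1))).measurable
  have hKbd : ∀ x, |∫ y, φ y ∂(K (t+1) x)| ≤ 1 := by
    intro x
    have h1 : ‖∫ y, φ y ∂(K (t+1) x)‖ ≤ 1 * ((K (t+1) x) Set.univ).toReal :=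
      norm_integral_le_of_norm_le_const
        (Filter.Eventually.of_forall fun y => by
          simpa [Real.norm_eq_abs] using hφb y)
    simpa [Real.norm_eq_abs, measure_univ] using h1
  -- notation
  set KI : X → ℝ := fun x => ∫ y, φ y ∂(K (t+1) x) with hKIdef
  set 𝒢 : MeasurableSpace Ω :=
    F t ⊔ (⨆ i, MeasurableSpace.comap (S t i) (⊤ : MeasurableSpace (Finset (Fin N))))
    with h𝒢def
  have hGle : 𝒢 ≤ m0 :=
    sup_le (hFle t)
      (iSup_le fun i => (measurable_iff_comap_le.mp (hSmeas t i)).trans (hFle (t+1)))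
  have hFG : F t ≤ 𝒢 := le_sup_left
  have hSG : ∀ i : Fin N, @Measurable Ω (Finset (Fin N)) 𝒢 ⊤ (S t i) := by
    intro i
    refine measurable_iff_comap_le.mpr ?_
    exact le_trans (le_iSup (fun i => MeasurableSpace.comap (S t i)
      (⊤ : MeasurableSpace (Finset (Fin N)))) i) le_sup_right
  -- Step A : conditional law of φ(ξ_{t+1}^{i0}) given 𝒢
  set ψ : Fin N → X → ℝ := fun i x => if i = i0 then φ x else 1 with hψdef
  have hψm : ∀ i, Measurable (ψ i) := by
    intro i
    by_cases h : i = i0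
    · simpa [hψdef, h] using hφm
    · simp only [hψdef, h, if_false]
      exact measurable_const
  have hψb : ∀ i x, |ψ i x| ≤ 1 := by
    intro i x
    by_cases h : i = i0 <;> simp [hψdef, h, hφb x]
  have hc0 := hcond t ψ hψm hψb
  have hL : (fun ω => ∏ i, ψ i (ξ (t + 1) i ω)) = fun ω => φ (ξ (t + 1) i0 ω) := by
    funext ω
    rw [Finset.prod_eq_single i0]
    · simp [hψdef]
    · intro i _ hne
      simp [hψdef, hne]
    · intro h; exact absurd (Finset.mem_univ i0) h
  have hR : (fun ω => ∏ i, ((W (t + 1) i ω)⁻¹ *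
        ∑ j, A t ω i j * W t j ω * g t (ξ t j ω) * ∫ y, ψ i y ∂(K (t + 1) (ξ t j ω))))
      = fun ω => (W (t + 1) i0 ω)⁻¹ *
        ∑ j, A t ω i0 j * W t j ω * g t (ξ t j ω) * KI (ξ t j ω) := by
    funext ω
    rw [Finset.prod_eq_single i0]
    · simp [hψdef, hKIdef]
    · intro i _ hne
      have h1 : ∀ j : Fin N, (∫ y, ψ i y ∂(K (t + 1) (ξ t j ω))) = 1 := by
        intro j
        simp [hψdef, hne, measure_univ]
      have h2 : (∑ j, A t ω i j * W t j ω * g t (ξ t j ω)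
            * ∫ y, ψ i y ∂(K (t + 1) (ξ t j ω)))
          = ∑ j, A t ω i j * W t j ω * g t (ξ t j ω) := by
        refine Finset.sum_congr rfl fun j _ => ?_
        rw [h1 j, mul_one]
      rw [h2, ← hWrec t i ω]
      exact inv_mul_cancel₀ (hWpos (t+1) i ω).ne'
    · intro h; exact absurd (Finset.mem_univ i0) h
  rw [hL, hR] at hc0
  -- Step B : pull out the 𝒢-measurable factor (W_{t+1}^{i0})²
  have hWG : Measurable[𝒢] (W (t+1) i0) := by
    have hrepr : W (t+1) i0 = fun ω => ∑ j, A t ω i0 j * W t j ω * g t (ξ t j ω) :=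
      funext (hWrec t i0)
    rw [hrepr]
    apply Finset.measurable_sum
    intro j _
    exact ((hAmeas 𝒢 t i0 j (hSG i0)).mul ((hWmeas t j).mono hFG le_rfl)).mul
      ((hgmeas t).comp ((hξmeas t j).mono hFG le_rfl))
  have hWsqG : StronglyMeasurable[𝒢] (fun ω => (W (t+1) i0 ω)^2) := by
    have hrepr : (fun ω => (W (t+1) i0 ω)^2)
        = fun ω => W (t+1) i0 ω * W (t+1) i0 ω := by
      funext ω; ring
    rw [hrepr]
    exact (hWG.mul hWG).stronglyMeasurable
  have hintφξ : Integrable (fun ω => φ (ξ (t + 1) i0 ω)) P :=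
    hInt _ 1 (hφm.comp (hξm0 (t+1) i0)) (fun ω => hφb _)
  have hintWφ : Integrable
      ((fun ω => (W (t+1) i0 ω)^2) * (fun ω => φ (ξ (t + 1) i0 ω))) P := by
    apply hInt _ (b ^ (t+1) * b ^ (t+1) * 1)
    · exact ((hWm0 (t+1) i0).pow_const 2).mul (hφm.comp (hξm0 (t+1) i0))
    · intro ω
      have h1 : |W (t+1) i0 ω| ≤ b ^ (t+1) := hWabs (t+1) i0 ω
      calc |((fun ω => (W (t+1) i0 ω)^2) * (fun ω => φ (ξ (t + 1) i0 ω))) ω|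
          = |W (t+1) i0 ω| * |W (t+1) i0 ω| * |φ (ξ (t + 1) i0 ω)| := by
            simp only [Pi.mul_apply, abs_mul, pow_two]
        _ ≤ b ^ (t+1) * b ^ (t+1) * 1 := by
            exact mul_le_mul (mul_le_mul h1 h1 (abs_nonneg _) (by positivity))
              (hφb _) (abs_nonneg _) (by positivity)
  have hmul := condExp_mul_of_stronglyMeasurable_left (μ := P) (m := 𝒢) hWsqG hintWφ hintφξ
  -- the summand functions over pairs of indices
  set cd : Fin N × Fin N → Ω → ℝ := fun p ω =>
    W t p.1 ω * g t (ξ t p.1 ω) * (W t p.2 ω * g t (ξ t p.2 ω) * KI (ξ t p.2 ω))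
    with hcddef
  set AAf : Fin N × Fin N → Ω → ℝ := fun p ω => A t ω i0 p.1 * A t ω i0 p.2 with hAAdef
  set I : Fin N × Fin N → ℝ := fun p => if p.1 = p.2 then ((C:ℝ) * N)⁻¹
    else ((C:ℝ) - 1) * ((C:ℝ) * N * ((N:ℝ) - 1))⁻¹ with hIdef
  set sq : Finset (Fin N × Fin N) := Finset.univ ×ˢ Finset.univ with hsqdef
  -- Step B' : pointwise expansion of the product
  have hB2 : P[(fun ω => (W (t+1) i0 ω)^2) * (fun ω => φ (ξ (t + 1) i0 ω)) | 𝒢]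
      =ᵐ[P] fun ω => ∑ p ∈ sq, cd p ω * AAf p ω := by
    refine hmul.trans ?_
    refine (Filter.EventuallyEq.mul (Filter.EventuallyEq.rfl) hc0).trans ?_
    have hpt : ((fun ω => (W (t+1) i0 ω)^2) * fun ω => (W (t + 1) i0 ω)⁻¹ *
          ∑ j, A t ω i0 j * W t j ω * g t (ξ t j ω) * KI (ξ t j ω))
        = fun ω => ∑ p ∈ sq, cd p ω * AAf p ω := by
      funext ω
      have hWne : W (t+1) i0 ω ≠ 0 := (hWpos (t+1) i0 ω).ne'
      have e1 : (W (t+1) i0 ω)^2 * ((W (t + 1) i0 ω)⁻¹ *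
            ∑ j, A t ω i0 j * W t j ω * g t (ξ t j ω) * KI (ξ t j ω))
          = W (t+1) i0 ω *
            ∑ j, A t ω i0 j * W t j ω * g t (ξ t j ω) * KI (ξ t j ω) := by
        field_simp
      calc ((fun ω => (W (t+1) i0 ω)^2) * fun ω => (W (t + 1) i0 ω)⁻¹ *
            ∑ j, A t ω i0 j * W t j ω * g t (ξ t j ω) * KI (ξ t j ω)) ω
          = W (t+1) i0 ω *
            ∑ j, A t ω i0 j * W t j ω * g t (ξ t j ω) * KI (ξ t j ω) := e1
        _ = (∑ j', A t ω i0 j' * W t j' ω * g t (ξ t j' ω)) *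
            ∑ j, A t ω i0 j * W t j ω * g t (ξ t j ω) * KI (ξ t j ω) := by
            rw [← hWrec t i0 ω]
        _ = ∑ j', ∑ j, (A t ω i0 j' * W t j' ω * g t (ξ t j' ω)) *
            (A t ω i0 j * W t j ω * g t (ξ t j ω) * KI (ξ t j ω)) := by
            rw [Finset.sum_mul_sum]
        _ = ∑ p ∈ sq, cd p ω * AAf p ω := by
            rw [hsqdef, Finset.sum_product]
            refine Finset.sum_congr rfl fun j' _ => ?_
            refine Finset.sum_congr rfl fun j _ => ?_
            simp only [hcddef, hAAdef]
            ring
    exact Filter.EventuallyEq.of_eq hpt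
  -- measurability and integrability of the summands
  have hSm0 : @Measurable Ω (Finset (Fin N)) m0 ⊤ (S t i0) :=
    (hSmeas t i0).mono (hFle (t+1)) le_rfl
  have hAbd : ∀ (j : Fin N) (ω : Ω), |A t ω i0 j| ≤ 1 := by
    intro j ω
    rw [hA]
    split
    · rw [abs_of_nonneg (by positivity)]
      exact inv_le_one_of_one_le₀ (by exact_mod_cast hC)
    · simp
  have hcdm : ∀ p : Fin N × Fin N, Measurable[F t] (cd p) := by
    intro p
    exact ((hWmeas t p.1).mul ((hgmeas t).comp (hξmeas t p.1))).mul
      (((hWmeas t p.2).mul ((hgmeas t).comp (hξmeas t p.2))).mul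
        (hKmeas.comp (hξmeas t p.2)))
  have hcdbd : ∀ (p : Fin N × Fin N) (ω : Ω),
      |cd p ω| ≤ b ^ t * b * (b ^ t * b * 1) := by
    intro p ω
    have hg1 : |g t (ξ t p.1 ω)| ≤ b := by
      rw [abs_of_pos (hgpos t _)]; exact hgb t _
    have hg2 : |g t (ξ t p.2 ω)| ≤ b := by
      rw [abs_of_pos (hgpos t _)]; exact hgb t _
    calc |cd p ω| = |W t p.1 ω| * |g t (ξ t p.1 ω)| *
          (|W t p.2 ω| * |g t (ξ t p.2 ω)| * |KI (ξ t p.2 ω)|) := by simp only [hcddef, abs_mul]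
      _ ≤ b ^ t * b * (b ^ t * b * 1) := by
        exact mul_le_mul
          (mul_le_mul (hWabs t _ ω) hg1 (abs_nonneg _) (by positivity))
          (mul_le_mul (mul_le_mul (hWabs t _ ω) hg2 (abs_nonneg _) (by positivity))
            (hKbd _) (abs_nonneg _) (by positivity))
          (by positivity) (by positivity)
  have hAAm0 : ∀ p : Fin N × Fin N, Measurable[m0] (AAf p) := fun p =>
    (hAmeas m0 t i0 p.1 hSm0).mul (hAmeas m0 t i0 p.2 hSm0)
  have hAAbd : ∀ (p : Fin N × Fin N) (ω : Ω), |AAf p ω| ≤ 1 := by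
    intro p ω
    simp only [hAAdef, abs_mul]
    exact mul_le_one₀ (hAbd _ ω) (abs_nonneg _) (hAbd _ ω)
  have hintT : ∀ p : Fin N × Fin N, Integrable (cd p * AAf p) P := by
    intro p
    apply hInt _ (b ^ t * b * (b ^ t * b * 1) * 1)
    · exact ((hcdm p).mono (hFle t) le_rfl).mul (hAAm0 p)
    · intro ω
      calc |(cd p * AAf p) ω| = |cd p ω| * |AAf p ω| := by
            simp only [Pi.mul_apply, abs_mul]
        _ ≤ b ^ t * b * (b ^ t * b * 1) * 1 :=
            mul_le_mul (hcdbd p ω) (hAAbd p ω) (abs_nonneg _) (by positivity)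
  have hintAA : ∀ p : Fin N × Fin N, Integrable (AAf p) P := fun p =>
    hInt _ 1 (hAAm0 p) (hAAbd p)
  -- the expected value of the matrix-entry products
  have hval : ∀ p : Fin N × Fin N, (∫ ω, AAf p ω ∂P) = I p := by
    intro p
    have hrepr : AAf p = fun ω =>
        (if p.1 ∈ S t i0 ω then (C:ℝ)⁻¹ else 0) *
        (if p.2 ∈ S t i0 ω then (C:ℝ)⁻¹ else 0) := by
      funext ω; simp [hAAdef, hA]
    rw [hrepr]
    exact @expAA Ω m0 P (by infer_instance) N C hC hCN (S t i0) hSm0 (hScard t i0)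
      (hSunif t i0) p.1 p.2
  -- conditional expectation of each summand
  have hpair : ∀ p : Fin N × Fin N,
      P[cd p * AAf p | F t] =ᵐ[P] fun ω => cd p ω * I p := by
    intro p
    have h1 := condExp_mul_of_stronglyMeasurable_left (μ := P) (m := F t)
      (hcdm p).stronglyMeasurable (hintT p) (hintAA p)
    have hmS : MeasurableSpace.comap (S t i0) (⊤ : MeasurableSpace (Finset (Fin N))) ≤ m0 :=
      (measurable_iff_comap_le.mp (hSmeas t i0)).trans (hFle (t+1))
    have hScomap : @Measurable Ω (Finset (Fin N))
        (MeasurableSpace.comap (S t i0) (⊤ : MeasurableSpace (Finset (Fin N)))) ⊤ (S t i0) :=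
      measurable_iff_comap_le.mpr le_rfl
    have hAAmS : StronglyMeasurable[MeasurableSpace.comap (S t i0)
        (⊤ : MeasurableSpace (Finset (Fin N)))] (AAf p) :=
      ((hAmeas _ t i0 p.1 hScomap).mul (hAmeas _ t i0 p.2 hScomap)).stronglyMeasurable
    have hindep := indep_of_indep_of_le_left (hSindep t)
      (le_iSup (fun i => MeasurableSpace.comap (S t i)
        (⊤ : MeasurableSpace (Finset (Fin N)))) i0)
    have h2 := condExp_indep_eq (μ := P) hmS (hFle t) hAAmS hindep
    refine h1.trans ?_
    filter_upwards [h2] with ω hω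
    simp only [Pi.mul_apply]
    rw [hω, hval p]
  -- tower property and assembly
  refine Filter.EventuallyEq.trans
    ((condExp_condExp_of_le (μ := P)
      (f := (fun ω => (W (t+1) i0 ω)^2) * (fun ω => φ (ξ (t + 1) i0 ω)))
      hFG hGle).symm) ?_
  refine Filter.EventuallyEq.trans (condExp_congr_ae hB2) ?_
  have hfs : (fun ω => ∑ p ∈ sq, cd p ω * AAf p ω) = ∑ p ∈ sq, (cd p * AAf p) := by
    funext ω
    simp [Finset.sum_apply]
  rw [hfs]
  refine Filter.EventuallyEq.trans (condExp_finset_sum (fun p _ => hintT p) (F t)) ?_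
  have hall : ∀ᵐ ω ∂P, ∀ p ∈ sq, (P[cd p * AAf p | F t]) ω = cd p ω * I p := by
    rw [Filter.eventually_all_finset]
    intro p _
    exact hpair p
  filter_upwards [hall] with ω hω
  rw [Finset.sum_apply, Finset.sum_congr rfl hω]
  -- final algebraic identity
  have hsplit : sq = Finset.univ.diag ∪ Finset.univ.offDiag := by
    rw [hsqdef, Finset.diag_union_offDiag]
  rw [hsplit, Finset.sum_union (Finset.disjoint_diag_offDiag _)]
  congr 1
  · rw [Finset.sum_diag, Finset.mul_sum]
    refine Finset.sum_congr rfl fun j _ => ?_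
    simp only [hcddef, hIdef, if_pos rfl]
    ring
  · rw [Finset.mul_sum]
    refine Finset.sum_congr rfl fun p hp => ?_
    have hne : p.1 ≠ p.2 := (Finset.mem_offDiag.mp hp).2.2
    simp only [hcddef, hIdef, if_neg hne]
    ring
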